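/- Let (X,d) be a complete metric space without isolated points (i.e., every point of X is an accumulation point of X). Then every compact subset K of X is contained in a compact subset L of X which has no isolated points (so L is a perfect compact set). -/

import Mathlib

open Set Filter Metric

/-- The Cantor space has no isolated points: within any neighborhood of a point,
there is a different point. -/
lemma cantor_exists_ne_mem_nhds (a : ℕ → Bool) {V : Set (ℕ → Bool)} (hV : V ∈ nhds a) :
    ∃ b ∈ V, b ≠ a := by
  -- consider bₙ = flip a at coordinate n; bₙ → a
  have htends : Filter.Tendsto (fun n : ℕ => Function.update a n (!a n)) Filter.atTop (nhds a) := by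
    rw [tendsto_pi_nhds]
    intro i
    apply tendsto_nhds_of_eventually_eq
    filter_upwards [Filter.eventually_gt_atTop i] with n hn
    exact Function.update_of_ne (by omega) _ _
  obtain ⟨n, hn⟩ := (htends.eventually_mem hV).exists
  refine ⟨_, hn, ?_⟩
  intro h
  have := congrFun h n
  simp [Function.update_self] at this

/-- In a complete metric space without isolated points, every closed ball of positive radius
contains a nonempty compact perfect set. -/
lemma exists_perfect_compact_in_closedBall {X : Type*} [MetricSpace X] [CompleteSpace X]
    (hX : Preperfect (Set.univ : Set X)) (p : X) {ε : ℝ} (hε : 0 < ε) :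
    ∃ D : Set X, D ⊆ closedBall p ε ∧ IsCompact D ∧ Perfect D ∧ D.Nonempty := by
  have hUniv : Perfect (Set.univ : Set X) := ⟨isClosed_univ, hX⟩
  have hmem : p ∈ ball p ε := mem_ball_self hε
  obtain ⟨hperf, hne⟩ := hUniv.closure_nhds_inter p (mem_univ p) hmem isOpen_ball
  obtain ⟨f, hfsub, hfc, hfi⟩ := hperf.exists_nat_bool_injection hne
  refine ⟨Set.range f, ?_, isCompact_range hfc, ?_, Set.range_nonempty f⟩
  · refine hfsub.trans ?_
    have h1 : ball p ε ∩ Set.univ ⊆ closedBall p ε := by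
      rw [inter_univ]; exact ball_subset_closedBall
    calc closure (ball p ε ∩ Set.univ) ⊆ closure (closedBall p ε) := closure_mono h1
      _ = closedBall p ε := IsClosed.closure_eq Metric.isClosed_closedBall
  · constructor
    · exact (isCompact_range hfc).isClosed
    · rintro x ⟨a, rfl⟩
      rw [accPt_iff_nhds]
      intro U hU
      have hpre : f ⁻¹' U ∈ nhds a := hfc.continuousAt.preimage_mem_nhds hU
      obtain ⟨b, hbU, hba⟩ := cantor_exists_ne_mem_nhds a hpre
      exact ⟨f b, ⟨hbU, Set.mem_range_self b⟩, fun h => hba (hfi h)⟩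

/-- **Perfect hulls of compact sets** (Lemma `justperfect`).
In a complete metric space without isolated points, every compact subset is contained in a
perfect compact subset. -/
theorem compact_subset_perfect_compact {X : Type*} [MetricSpace X] [CompleteSpace X]
    (hX : Preperfect (Set.univ : Set X))
    (K : Set X) (hK : IsCompact K) :
    ∃ L : Set X, K ⊆ L ∧ IsCompact L ∧ Perfect L := by
  -- radii
  set r : ℕ → ℝ := fun n => 1 / (n + 1) with hr
  have hrpos : ∀ n, 0 < r n := fun n => by positivity
  -- finite (r n)-nets of K, with centers in K
  have hcov : ∀ n : ℕ, ∃ t ⊆ K, t.Finite ∧ K ⊆ ⋃ p ∈ t, ball p (r n) := by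
    intro n
    exact hK.elim_finite_subcover_image (fun p _ => isOpen_ball)
      (fun x hx => Set.mem_biUnion hx (mem_ball_self (hrpos n)))
  choose t htK htfin htcov using hcov
  -- perfect compact sets in small balls
  choose D hDsub hDcomp hDperf hDne using
    fun (n : ℕ) (p : X) => exists_perfect_compact_in_closedBall hX p (hrpos n)
  set L : Set X := K ∪ ⋃ n, ⋃ p ∈ t n, D n p with hLdef
  have hKL : K ⊆ L := subset_union_left
  have hDL : ∀ n p, p ∈ t n → D n p ⊆ L := by
    intro n p hp y hy
    exact Or.inr (Set.mem_iUnion.mpr ⟨n, Set.mem_biUnion hp hy⟩)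
  -- points of D n p are close to x when x is in the ball around p
  have hDnear : ∀ n p x, x ∈ ball p (r n) → ∀ y ∈ D n p, dist y x < 2 * r n := by
    intro n p x hx y hy
    have h1 : dist y p ≤ r n := hDsub n p hy
    have h2 : dist p x < r n := by rw [mem_ball, dist_comm] at hx; exact hx
    calc dist y x ≤ dist y p + dist p x := dist_triangle _ _ _
      _ < r n + r n := by linarith
      _ = 2 * r n := by ring
  -- Preperfect L
  have hpre : Preperfect L := by
    intro x hx
    rcases hx with hxK | hxU
    · rw [accPt_iff_nhds]
      intro U hU
      obtain ⟨ε, hε, hball⟩ := Metric.mem_nhds_iff.mp hU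
      obtain ⟨n, hn⟩ := exists_nat_one_div_lt (half_pos hε)
      have hrn : r n < ε / 2 := hn
      have hxcov := htcov n hxK
      rw [Set.mem_iUnion₂] at hxcov
      obtain ⟨p, hp, hxp⟩ := hxcov
      have hDU : D n p ⊆ U := by
        intro y hy
        apply hball
        rw [mem_ball]
        have := hDnear n p x hxp y hy
        linarith
      by_cases hxD : x ∈ D n p
      · have hacc := (hDperf n p).acc x hxD
        rw [accPt_iff_nhds] at hacc
        obtain ⟨y, ⟨hyU, hyD⟩, hyx⟩ := hacc U hU
        exact ⟨y, ⟨hyU, hDL n p hp hyD⟩, hyx⟩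
      · obtain ⟨y, hy⟩ := hDne n p
        exact ⟨y, ⟨hDU hy, hDL n p hp hy⟩, fun h => hxD (h ▸ hy)⟩
    · rw [Set.mem_iUnion] at hxU
      obtain ⟨n, hxU⟩ := hxU
      rw [Set.mem_iUnion₂] at hxU
      obtain ⟨p, hp, hxD⟩ := hxU
      exact ((hDperf n p).acc x hxD).mono (principal_mono.mpr (hDL n p hp))
  -- totally bounded
  have htb : TotallyBounded L := by
    rw [Metric.totallyBounded_iff]
    intro ε hε
    obtain ⟨N, hN⟩ := exists_nat_one_div_lt (half_pos hε)
    have hrN : r N < ε / 2 := hN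
    -- the compact part: small n
    have hA : IsCompact (⋃ n ∈ Finset.range (N + 1), ⋃ p ∈ t n, D n p) := by
      apply (Finset.range (N + 1)).finite_toSet.isCompact_biUnion
      intro n _
      exact (htfin n).isCompact_biUnion fun p _ => hDcomp n p
    obtain ⟨t1, ht1fin, ht1cov⟩ := Metric.totallyBounded_iff.mp hA.totallyBounded ε hε
    obtain ⟨t2, ht2fin, ht2cov⟩ :=
      Metric.totallyBounded_iff.mp hK.totallyBounded (ε / 2) (half_pos hε)
    refine ⟨t1 ∪ t2, ht1fin.union ht2fin, ?_⟩
    have hKcov : ∀ x ∈ K, x ∈ ⋃ y ∈ t1 ∪ t2, ball y ε := by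
      intro x hxK
      obtain ⟨c, hc, hxc⟩ := Set.mem_iUnion₂.mp (ht2cov hxK)
      exact Set.mem_biUnion (Set.mem_union_right _ hc)
        (lt_of_lt_of_le hxc (by linarith : ε / 2 ≤ ε))
    intro x hx
    rcases hx with hxK | hxU
    · exact hKcov x hxK
    · rw [Set.mem_iUnion] at hxU
      obtain ⟨n, hxU⟩ := hxU
      rw [Set.mem_iUnion₂] at hxU
      obtain ⟨p, hp, hxD⟩ := hxU
      by_cases hnN : n ≤ N
      · have : x ∈ ⋃ n ∈ Finset.range (N + 1), ⋃ p ∈ t n, D n p := by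
          refine Set.mem_biUnion ?_ (Set.mem_biUnion hp hxD)
          exact Finset.mem_range.mpr (by omega)
        obtain ⟨c, hc, hxc⟩ := Set.mem_iUnion₂.mp (ht1cov this)
        exact Set.mem_biUnion (Set.mem_union_left _ hc) hxc
      · -- n > N : x is within r n ≤ r N < ε/2 of p ∈ K
        have hxp : dist x p ≤ r n := hDsub n p hxD
        have hrmono : r n ≤ r N := by
          apply div_le_div_of_nonneg_left (by norm_num) (by positivity)
          have hNn : N + 1 ≤ n + 1 := by omega
          exact_mod_cast hNn
        have hpK : p ∈ K := htK n hp
        obtain ⟨c, hc, hpc⟩ := Set.mem_iUnion₂.mp (ht2cov hpK)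
        refine Set.mem_biUnion (Set.mem_union_right _ hc) ?_
        rw [mem_ball] at hpc ⊢
        calc dist x c ≤ dist x p + dist p c := dist_triangle _ _ _
          _ < ε := by linarith
    -- done
  -- conclude with the closure of L
  refine ⟨closure L, hKL.trans subset_closure, ?_, preperfect_iff_perfect_closure.mp hpre⟩
  exact TotallyBounded.isCompact_of_isClosed htb.closure isClosed_closure
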